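/- Fix a > 0 and define h_1 : ℝ → ℝ by h_1(x) = (6π²/a²) cos(π√10 (3 − x/a)) for x ∈ (5a/2, 3a) and h_1(x) = 0 otherwise, and e_1 : ℝ → ℝ by e_1(x) = cos(4πx/a) − cos(2πx/a). Let K_{h_1}(x) = ∫_x^{3a} h_1(τ) dτ and (M_{h_1} e_1)(x) = ∫_{3a/2}^{7a/2−x} K_{h_1}(x + t − a/2) e_1(t) dt. Then: (i) ∫_{3a/2}^{2a} e_1(x) dx = 0; and (ii) (M_{h_1} e_1)(x) = −e_1(x) for every x ∈ (3a/2, 2a). -/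

import Mathlib

open MeasureTheory Set
open scoped Real

noncomputable def h1 (a : ℝ) (x : ℝ) : ℝ :=
  if x ∈ Set.Ioo (5 * a / 2) (3 * a) then
    (6 * π ^ 2 / a ^ 2) * Real.cos (π * Real.sqrt 10 * (3 - x / a))
  else 0

noncomputable def e1 (a : ℝ) (x : ℝ) : ℝ :=
  Real.cos (4 * π * x / a) - Real.cos (2 * π * x / a)

noncomputable def Kh1 (a : ℝ) (x : ℝ) : ℝ := ∫ τ in x..(3 * a), h1 a τ

noncomputable def Mh1e1 (a : ℝ) (x : ℝ) : ℝ :=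
  ∫ t in (3 * a / 2)..(7 * a / 2 - x), Kh1 a (x + t - a / 2) * e1 a t

lemma deriv_algebra (a s pv SP CP S4 C4 S2 C2 : ℝ) (ha : a ≠ 0) (hs0 : s ≠ 0) (hs : s*s = 10) :
  (1/(2*s)) * ( -(s+4) * (-(SP*C4 + CP*S4) * (pv*s*-(1/a) + 4*pv*1/a))
              - (s-4) * (-(SP*C4 - CP*S4) * (pv*s*-(1/a) - 4*pv*1/a))
              - (s+2) * (-(SP*C2 + CP*S2) * (pv*s*-(1/a) + 2*pv*1/a))
              - (s-2) * (-(SP*C2 - CP*S2) * (pv*s*-(1/a) - 2*pv*1/a)) )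
  = 6*pv/(a*s) * SP * (C4 - C2) := by
  field_simp
  ring_nf
  linear_combination (-2*pv*SP*(C4+C2)) * hs

lemma cos_add_even (y : ℝ) (n : ℤ) : Real.cos (y + n * (2*π)) = Real.cos y := by
  rw [Real.cos_add]
  have h2 : Real.sin ((n:ℝ)*(2*π)) = 0 := by
    have h : ((n:ℝ))*(2*π) = ((2*n : ℤ):ℝ)*π := by push_cast; ring
    rw [h, Real.sin_int_mul_pi]
  rw [Real.cos_int_mul_two_pi, h2]
  ring

lemma c14m (y : ℝ) : Real.cos (14*π - y) = Real.cos y := by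
  rw [show 14*π - y = -y + (7:ℤ)*(2*π) by push_cast; ring, cos_add_even, Real.cos_neg]

lemma c14m2 (y : ℝ) : Real.cos (y - 14*π) = Real.cos y := by
  rw [show y - 14*π = y + (-7:ℤ)*(2*π) by push_cast; ring, cos_add_even]

lemma c7m (y : ℝ) : Real.cos (7*π - y) = -Real.cos y := by
  rw [show 7*π - y = (π - y) + (3:ℤ)*(2*π) by push_cast; ring, cos_add_even, Real.cos_pi_sub]

lemma c7m2 (y : ℝ) : Real.cos (y - 7*π) = -Real.cos y := by
  rw [show y - 7*π = (y + π) + (-4:ℤ)*(2*π) by push_cast; ring, cos_add_even, Real.cos_add_pi]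

lemma c6p (y : ℝ) : Real.cos (y + 6*π) = Real.cos y := by
  rw [show y + 6*π = y + (3:ℤ)*(2*π) by push_cast; ring, cos_add_even]

lemma c6m (y : ℝ) : Real.cos (y - 6*π) = Real.cos y := by
  rw [show y - 6*π = y + (-3:ℤ)*(2*π) by push_cast; ring, cos_add_even]

lemma c3p (y : ℝ) : Real.cos (y + 3*π) = -Real.cos y := by
  rw [show y + 3*π = (y + π) + (1:ℤ)*(2*π) by push_cast; ring, cos_add_even, Real.cos_add_pi]

lemma c3m (y : ℝ) : Real.cos (y - 3*π) = -Real.cos y := by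
  rw [show y - 3*π = (y + π) + (-2:ℤ)*(2*π) by push_cast; ring, cos_add_even, Real.cos_add_pi]

lemma kh1_eq (a : ℝ) (ha : 0 < a) (u : ℝ) (hu : u ∈ Set.Ioc (5*a/2) (3*a)) :
    Kh1 a u = (6*π/(a*Real.sqrt 10)) * Real.sin (π*Real.sqrt 10*(3 - u/a)) := by
  have hs0 : Real.sqrt 10 ≠ 0 := by positivity
  have hule : u ≤ 3*a := hu.2
  have hcongr : (∫ τ in u..(3*a), h1 a τ)
      = ∫ τ in u..(3*a), (6 * π ^ 2 / a ^ 2) * Real.cos (π * Real.sqrt 10 * (3 - τ / a)) := by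
    apply intervalIntegral.integral_congr_ae
    refine MeasureTheory.ae_iff.mpr (measure_mono_null ?_ (measure_singleton (3*a)))
    intro τ hτ
    simp only [Set.mem_setOf_eq, Classical.not_imp] at hτ
    obtain ⟨hmem, hne⟩ := hτ
    rw [Set.uIoc_of_le hule] at hmem
    simp only [Set.mem_singleton_iff]
    by_contra h3
    exact hne (by rw [h1, if_pos ⟨lt_trans hu.1 hmem.1, lt_of_le_of_ne hmem.2 h3⟩])
  have hderiv : ∀ τ ∈ Set.uIcc u (3*a),
      HasDerivAt (fun τ : ℝ => -(6*π/(a*Real.sqrt 10)) * Real.sin (π*Real.sqrt 10*(3 - τ/a)))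
        ((6 * π ^ 2 / a ^ 2) * Real.cos (π * Real.sqrt 10 * (3 - τ / a))) τ := by
    intro τ _
    have h₁ : HasDerivAt (fun τ : ℝ => π*Real.sqrt 10*(3 - τ/a)) (π*Real.sqrt 10 * -(1/a)) τ :=
      (((hasDerivAt_id τ).div_const a).const_sub 3).const_mul _
    have h₂ := (h₁.sin).const_mul (-(6*π/(a*Real.sqrt 10)))
    refine h₂.congr_deriv (Eq.symm ?_)
    field_simp
  rw [Kh1, hcongr, intervalIntegral.integral_eq_sub_of_hasDerivAt hderiv
    ((Continuous.intervalIntegrable (by fun_prop) _ _))]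
  have h3a : 3*a/a = 3 := by field_simp
  rw [h3a]
  simp

theorem statement19 (a : ℝ) (ha : 0 < a) :
    (∫ x in (3 * a / 2)..(2 * a), e1 a x) = 0 ∧
    ∀ x ∈ Set.Ioo (3 * a / 2) (2 * a), Mh1e1 a x = -e1 a x := by
  have ha' : a ≠ 0 := ha.ne'
  have hs0 : Real.sqrt 10 ≠ 0 := by positivity
  have hs : Real.sqrt 10 * Real.sqrt 10 = 10 := Real.mul_self_sqrt (by norm_num)
  constructor
  · -- part (i)
    have hderiv : ∀ y ∈ Set.uIcc (3*a/2) (2*a),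
        HasDerivAt (fun y : ℝ => a/(4*π) * Real.sin (4*π*y/a) - a/(2*π) * Real.sin (2*π*y/a))
          (e1 a y) y := by
      intro y _
      have h4 : HasDerivAt (fun y : ℝ => 4*π*y/a) (4*π*1/a) y :=
        ((hasDerivAt_id y).const_mul (4*π)).div_const a
      have h2 : HasDerivAt (fun y : ℝ => 2*π*y/a) (2*π*1/a) y :=
        ((hasDerivAt_id y).const_mul (2*π)).div_const a
      have h := ((h4.sin).const_mul (a/(4*π))).sub ((h2.sin).const_mul (a/(2*π)))
      refine h.congr_deriv (Eq.symm ?_)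
      rw [e1]
      have hπ : π ≠ 0 := Real.pi_ne_zero
      field_simp
    rw [intervalIntegral.integral_eq_sub_of_hasDerivAt hderiv
      ((Continuous.intervalIntegrable (by unfold e1; fun_prop) _ _))]
    rw [show 4*π*(2*a)/a = (8:ℤ)*π by push_cast; field_simp; ring,
        show 2*π*(2*a)/a = (4:ℤ)*π by push_cast; field_simp; ring,
        show 4*π*(3*a/2)/a = (6:ℤ)*π by push_cast; field_simp; ring,
        show 2*π*(3*a/2)/a = (3:ℤ)*π by push_cast; field_simp,
        Real.sin_int_mul_pi, Real.sin_int_mul_pi, Real.sin_int_mul_pi, Real.sin_int_mul_pi]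
    ring
  · -- part (ii)
    intro x hx
    obtain ⟨hx1, hx2⟩ := hx
    have hLle : 3*a/2 ≤ 7*a/2 - x := by linarith
    have hcongr : Mh1e1 a x = ∫ t in (3*a/2)..(7*a/2 - x),
        (6*π/(a*Real.sqrt 10)) * Real.sin (π*Real.sqrt 10*(3 - (x + t - a/2)/a)) * e1 a t := by
      rw [Mh1e1]
      apply intervalIntegral.integral_congr
      intro t ht
      rw [Set.uIcc_of_le hLle] at ht
      show Kh1 a (x + t - a/2) * e1 a t
        = 6*π/(a*Real.sqrt 10) * Real.sin (π*Real.sqrt 10*(3 - (x + t - a/2)/a)) * e1 a t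
      rw [kh1_eq a ha (x + t - a/2) ⟨by linarith [ht.1], by linarith [ht.2]⟩]
    rw [hcongr]
    have hderiv : ∀ t ∈ Set.uIcc (3*a/2) (7*a/2 - x),
        HasDerivAt (fun t : ℝ => (1/(2*Real.sqrt 10)) *
          ( -(Real.sqrt 10+4) * Real.cos (π*Real.sqrt 10*(3 - (x + t - a/2)/a) + 4*π*t/a)
          - (Real.sqrt 10-4) * Real.cos (π*Real.sqrt 10*(3 - (x + t - a/2)/a) - 4*π*t/a)
          - (Real.sqrt 10+2) * Real.cos (π*Real.sqrt 10*(3 - (x + t - a/2)/a) + 2*π*t/a)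
          - (Real.sqrt 10-2) * Real.cos (π*Real.sqrt 10*(3 - (x + t - a/2)/a) - 2*π*t/a)))
          ((6*π/(a*Real.sqrt 10)) * Real.sin (π*Real.sqrt 10*(3 - (x + t - a/2)/a)) * e1 a t) t := by
      intro t _
      have hp : HasDerivAt (fun t : ℝ => π*Real.sqrt 10*(3 - (x + t - a/2)/a))
          (π*Real.sqrt 10 * -(1/a)) t :=
        (((((hasDerivAt_id t).const_add x).sub_const (a/2)).div_const a).const_sub 3).const_mul _
      have hq4 : HasDerivAt (fun t : ℝ => 4*π*t/a) (4*π*1/a) t :=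
        ((hasDerivAt_id t).const_mul (4*π)).div_const a
      have hq2 : HasDerivAt (fun t : ℝ => 2*π*t/a) (2*π*1/a) t :=
        ((hasDerivAt_id t).const_mul (2*π)).div_const a
      have h := (((((hp.add hq4).cos.const_mul (-(Real.sqrt 10+4))).sub
        ((hp.sub hq4).cos.const_mul (Real.sqrt 10-4))).sub
        ((hp.add hq2).cos.const_mul (Real.sqrt 10+2))).sub
        ((hp.sub hq2).cos.const_mul (Real.sqrt 10-2))).const_mul (1/(2*Real.sqrt 10))
      refine h.congr_deriv (Eq.symm ?_)
      rw [e1]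
      simp only [Pi.add_apply, Pi.sub_apply, Real.sin_add, Real.sin_sub]
      exact (deriv_algebra a (Real.sqrt 10) π
        (Real.sin (π*Real.sqrt 10*(3 - (x + t - a/2)/a)))
        (Real.cos (π*Real.sqrt 10*(3 - (x + t - a/2)/a)))
        (Real.sin (4*π*t/a)) (Real.cos (4*π*t/a))
        (Real.sin (2*π*t/a)) (Real.cos (2*π*t/a)) ha' hs0 hs).symm
    rw [intervalIntegral.integral_eq_sub_of_hasDerivAt hderiv
      ((Continuous.intervalIntegrable (by unfold e1; fun_prop) _ _))]
    rw [show π*Real.sqrt 10*(3 - (x + (7*a/2 - x) - a/2)/a) + 4*π*(7*a/2 - x)/a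
          = 14*π - 4*π*x/a by field_simp; ring,
        show π*Real.sqrt 10*(3 - (x + (7*a/2 - x) - a/2)/a) - 4*π*(7*a/2 - x)/a
          = 4*π*x/a - 14*π by field_simp; ring,
        show π*Real.sqrt 10*(3 - (x + (7*a/2 - x) - a/2)/a) + 2*π*(7*a/2 - x)/a
          = 7*π - 2*π*x/a by field_simp; ring,
        show π*Real.sqrt 10*(3 - (x + (7*a/2 - x) - a/2)/a) - 2*π*(7*a/2 - x)/a
          = 2*π*x/a - 7*π by field_simp; ring,
        show π*Real.sqrt 10*(3 - (x + 3*a/2 - a/2)/a) + 4*π*(3*a/2)/a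
          = π*Real.sqrt 10*(2 - x/a) + 6*π by field_simp; ring,
        show π*Real.sqrt 10*(3 - (x + 3*a/2 - a/2)/a) - 4*π*(3*a/2)/a
          = π*Real.sqrt 10*(2 - x/a) - 6*π by field_simp; ring,
        show π*Real.sqrt 10*(3 - (x + 3*a/2 - a/2)/a) + 2*π*(3*a/2)/a
          = π*Real.sqrt 10*(2 - x/a) + 3*π by field_simp; ring,
        show π*Real.sqrt 10*(3 - (x + 3*a/2 - a/2)/a) - 2*π*(3*a/2)/a
          = π*Real.sqrt 10*(2 - x/a) - 3*π by field_simp; ring,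
        c14m, c14m2, c7m, c7m2, c6p, c6m, c3p, c3m, e1]
    field_simp
    ring
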